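/- Let d ≥ 1, let x0 ≠ x1 ∈ ℝ^d, let δ > 0 with 0 < ‖x1 − x0‖ < πδ, and let m0, m1 > 0. Set τ = tan(‖x1 − x0‖/(2δ)), c = √(m0 m1 / (1 + τ²)), A = m0 + m1 − 2c, B = m0 − c, D = √(m0·A − B²), l = (x1 − x0)/‖x1 − x0‖, and ω0 = 2δ τ c · l. Define η(t) = x0 + (ω0 / D)·( arctan((A t − B)/D) − arctan(−B/D) ). Then D > 0, η(0) = x0, and η(1) = x1; that is, the traveling-Dirac mean trajectory connects the prescribed endpoints. -/

import Mathlib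

set_option maxHeartbeats 1000000


theorem travelling_dirac_mean_connects_endpoints
    {d : ℕ} (hd : 1 ≤ d)
    (x0 x1 : EuclideanSpace ℝ (Fin d)) (hx : x0 ≠ x1)
    (δ : ℝ) (hδ : 0 < δ) (hnorm : 0 < ‖x1 - x0‖ ∧ ‖x1 - x0‖ < Real.pi * δ)
    (m0 m1 : ℝ) (hm0 : 0 < m0) (hm1 : 0 < m1)
    (τ c A B D : ℝ)
    (hτ : τ = Real.tan (‖x1 - x0‖ / (2 * δ)))
    (hc : c = Real.sqrt (m0 * m1 / (1 + τ ^ 2)))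
    (hA : A = m0 + m1 - 2 * c) (hB : B = m0 - c)
    (hD : D = Real.sqrt (m0 * A - B ^ 2))
    (l : EuclideanSpace ℝ (Fin d)) (hl : l = ‖x1 - x0‖⁻¹ • (x1 - x0))
    (ω0 : EuclideanSpace ℝ (Fin d)) (hω0 : ω0 = (2 * δ * τ * c) • l)
    (η : ℝ → EuclideanSpace ℝ (Fin d))
    (hη : ∀ t, η t = x0 +
      ((Real.arctan ((A * t - B) / D) - Real.arctan (-B / D)) / D) • ω0) :
    0 < D ∧ η 0 = x0 ∧ η 1 = x1 := by
  obtain ⟨hn0, hn1⟩ := hnorm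
  set θ := ‖x1 - x0‖ / (2 * δ) with hθdef
  have hθpos : 0 < θ := div_pos hn0 (by linarith)
  have hθlt : θ < Real.pi / 2 := by
    rw [hθdef, div_lt_div_iff₀ (by linarith) (by norm_num)]
    nlinarith
  have hτpos : 0 < τ := hτ ▸ Real.tan_pos_of_pos_of_lt_pi_div_two hθpos hθlt
  have hcpos : 0 < c := hc ▸ Real.sqrt_pos.mpr (by positivity)
  have hcsq : c ^ 2 * (1 + τ ^ 2) = m0 * m1 := by
    have : c ^ 2 = m0 * m1 / (1 + τ ^ 2) := by
      rw [hc, Real.sq_sqrt (by positivity)]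
    rw [this, div_mul_cancel₀ _ (by positivity)]
  have hclt : c ^ 2 < m0 * m1 := by nlinarith [mul_pos (pow_pos hcpos 2) (pow_pos hτpos 2)]
  have hDsq : m0 * A - B ^ 2 = (τ * c) ^ 2 := by
    rw [hA, hB]; nlinarith
  have hDval : D = τ * c := by
    rw [hD, hDsq, Real.sqrt_sq (by positivity)]
  have hDpos : 0 < D := by rw [hDval]; positivity
  have hApos : 0 < A := by nlinarith
  refine ⟨hDpos, ?_, ?_⟩
  · rw [hη]; norm_num
  · rw [hη]
    have huv : (m1 - c) / D * ((m0 - c) / D) < 1 := by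
      have hcA : 0 < c * (m0 + m1 - 2 * c) := by
        have := mul_pos hcpos hApos
        nlinarith
      rw [div_mul_div_comm, div_lt_one (by positivity), hDval]
      nlinarith [hcA, hcsq]
    have key : Real.arctan ((A * 1 - B) / D) - Real.arctan (-B / D) = θ := by
      have h1 : (A * 1 - B) / D = (m1 - c) / D := by rw [hA, hB]; ring_nf
      have h2 : (-B / D) = -((m0 - c) / D) := by rw [hB]; ring
      rw [h1, h2, Real.arctan_neg, sub_neg_eq_add, Real.arctan_add huv]
      have harg : ((m1 - c) / D + (m0 - c) / D) / (1 - (m1 - c) / D * ((m0 - c) / D)) = τ := by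
        have hY : (0:ℝ) < 1 - (m1 - c) / D * ((m0 - c) / D) := by linarith
        rw [div_eq_iff (ne_of_gt hY), hDval]
        have hτc : τ * c ≠ 0 := by positivity
        field_simp
        ring_nf
        nlinarith [hcsq, sq_nonneg (τ*c)]
      rw [harg, hτ, Real.arctan_tan (by linarith) hθlt]
    rw [key, hω0, smul_smul, hl, smul_smul, hDval]
    have hnne : ‖x1 - x0‖ ≠ 0 := ne_of_gt hn0
    have hcoef : θ / (τ * c) * (2 * δ * τ * c) * ‖x1 - x0‖⁻¹ = 1 := by
      rw [hθdef]
      field_simp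
    rw [hcoef, one_smul]
    abel
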